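/- For every integer n ≥ 2, the 2-token graph F_2(K_{1,n}) of the star graph K_{1,n} is isomorphic to the barycentric subdivision S(K_n) of the complete graph K_n, via the map sending the original vertex i of K_n to the 2-subset {0, i} and sending the subdivision vertex of the edge {i, j} to the 2-subset {i, j}. Here S(K_n) is the simple graph whose vertex set is the disjoint union of {1, …, n} and the set of 2-element subsets of {1, …, n}, where a vertex i is adjacent to a 2-subset {a, b} if and only if i ∈ {a, b}, and there are no other adjacencies. -/

import Mathlib

open SimpleGraph Finset

variable {V : Type*}

/-- The `k`-token graph of a simple graph `X`: vertices are the `k`-element subsets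
of the vertex set, two subsets being adjacent when their symmetric difference is an
edge of `X`. -/
def tokenGraph [DecidableEq V] (X : SimpleGraph V) (k : ℕ) :
    SimpleGraph {A : Finset V // A.card = k} where
  Adj A B := ∃ a b : V, X.Adj a b ∧ (symmDiff A.val B.val) = {a, b}
  symm := by
    constructor
    rintro A B ⟨a, b, hab, h⟩
    exact ⟨b, a, hab.symm, by rw [symmDiff_comm]; rw [h]; exact Finset.pair_comm a b⟩
  loopless := by
    constructor
    rintro A ⟨a, b, hab, h⟩
    simp only [symmDiff_self, Finset.bot_eq_empty] at h
    exact (Finset.insert_ne_empty a {b}) h.symm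

/-- A simple graph is edge-transitive if its automorphism group acts transitively
on its edges. -/
def EdgeTransitive {W : Type*} (Y : SimpleGraph W) : Prop :=
  ∀ e ∈ Y.edgeSet, ∀ f ∈ Y.edgeSet, ∃ φ : Y ≃g Y, e.map φ = f

/-- A simple graph is vertex-transitive if its automorphism group acts transitively
on its vertices. -/
def VertexTransitive {W : Type*} (Y : SimpleGraph W) : Prop :=
  ∀ u v : W, ∃ φ : Y ≃g Y, φ u = v

/-- The star graph `K_{1,n}` on vertex set `{0, 1, …, n}`, where the center `0`
is joined to each of the `n` leaves. -/
def starGraph (n : ℕ) : SimpleGraph (Fin (n + 1)) where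
  Adj i j := i ≠ j ∧ (i = 0 ∨ j = 0)
  symm := by constructor; rintro i j ⟨hne, h⟩; exact ⟨hne.symm, h.symm⟩
  loopless := by constructor; rintro i ⟨hne, _⟩; exact hne rfl

/-- The barycentric subdivision `S(K_n)` of the complete graph `K_n`: its vertices are
the vertices of `K_n` together with the `2`-subsets of vertices (one subdivision vertex
per edge), and a vertex `i` is adjacent to a `2`-subset `A` iff `i ∈ A`. -/
def subdivisionComplete (n : ℕ) :
    SimpleGraph (Fin n ⊕ {A : Finset (Fin n) // A.card = 2}) where
  Adj v w :=
    (∃ (i : Fin n) (A : {A : Finset (Fin n) // A.card = 2}),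
      v = Sum.inl i ∧ w = Sum.inr A ∧ i ∈ A.val) ∨
    (∃ (i : Fin n) (A : {A : Finset (Fin n) // A.card = 2}),
      v = Sum.inr A ∧ w = Sum.inl i ∧ i ∈ A.val)
  symm := by
    constructor
    rintro v w (⟨i, A, h1, h2, h3⟩ | ⟨i, A, h1, h2, h3⟩)
    · exact Or.inr ⟨i, A, h2, h1, h3⟩
    · exact Or.inl ⟨i, A, h2, h1, h3⟩
  loopless := by
    constructor
    rintro v (⟨i, A, h1, h2, _⟩ | ⟨i, A, h1, h2, _⟩) <;> rw [h1] at h2 <;> exact absurd h2 (by simp)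



lemma tokenStar_adj_iff (n : ℕ) (B C : {A : Finset (Fin (n + 1)) // A.card = 2}) :
    (tokenGraph (_root_.starGraph n) 2).Adj B C ↔
      (0 : Fin (n + 1)) ∈ symmDiff B.val C.val ∧ (symmDiff B.val C.val).card = 2 := by
  constructor
  · rintro ⟨a, b, ⟨hne, h0⟩, h⟩
    rw [h]
    refine ⟨?_, Finset.card_pair hne⟩
    rcases h0 with rfl | rfl <;> simp
  · rintro ⟨h0, hc⟩
    rw [Finset.card_eq_two] at hc
    obtain ⟨a, b, hab, h⟩ := hc
    rw [h] at h0
    simp only [Finset.mem_insert, Finset.mem_singleton] at h0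
    rcases h0 with rfl | rfl
    · exact ⟨0, b, ⟨hab, Or.inl rfl⟩, h⟩
    · exact ⟨a, 0, ⟨hab, Or.inr rfl⟩, h⟩

lemma key_adj' (n : ℕ) (i : Fin n) (A : Finset (Fin n)) (hA2 : A.card = 2) :
    ((0 : Fin (n + 1)) ∈ symmDiff ({0, i.succ} : Finset (Fin (n + 1))) (A.image Fin.succ) ∧
      (symmDiff ({0, i.succ} : Finset (Fin (n + 1))) (A.image Fin.succ)).card = 2) ↔
      i ∈ A := by
  obtain ⟨a, b, hab, rfl⟩ := Finset.card_eq_two.mp hA2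
  have heq : ∀ (u v : Fin n), u ≠ v →
      symmDiff ({0, u.succ} : Finset (Fin (n + 1)))
        (({u, v} : Finset (Fin n)).image Fin.succ) = {0, v.succ} := by
    intro u v huv
    ext x
    simp only [Finset.mem_symmDiff, Finset.mem_insert, Finset.mem_singleton,
      Finset.image_insert, Finset.image_singleton]
    have h1 := Fin.succ_ne_zero u
    have h2 := Fin.succ_ne_zero v
    have h3 : u.succ ≠ v.succ := fun h => huv (Fin.succ_injective n h)
    constructor
    · rintro (⟨h, hn⟩ | ⟨h, hn⟩) <;> push_neg at hn <;> tauto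
    · rintro (rfl | rfl)
      · exact Or.inl ⟨Or.inl rfl, by push_neg; tauto⟩
      · exact Or.inr ⟨Or.inr rfl, by push_neg; tauto⟩
  constructor
  · rintro ⟨h0, hc⟩
    by_contra hi
    simp only [Finset.mem_insert, Finset.mem_singleton] at hi
    push_neg at hi
    obtain ⟨hia, hib⟩ := hi
    have hsub : ({0, i.succ, a.succ} : Finset (Fin (n + 1))) ⊆
        symmDiff ({0, i.succ} : Finset (Fin (n + 1)))
          (({a, b} : Finset (Fin n)).image Fin.succ) := by
      intro x hx
      simp only [Finset.mem_insert, Finset.mem_singleton] at hx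
      simp only [Finset.mem_symmDiff, Finset.mem_insert, Finset.mem_singleton,
        Finset.mem_image]
      rcases hx with rfl | rfl | rfl
      · refine Or.inl ⟨Or.inl rfl, ?_⟩
        rintro ⟨y, -, hy⟩
        exact Fin.succ_ne_zero y hy
      · refine Or.inl ⟨Or.inr rfl, ?_⟩
        rintro ⟨y, hy, hy'⟩
        rcases hy with rfl | rfl
        · exact hia (Fin.succ_injective n hy').symm
        · exact hib (Fin.succ_injective n hy').symm
      · refine Or.inr ⟨⟨a, by simp, rfl⟩, ?_⟩
        push_neg
        refine ⟨Fin.succ_ne_zero a, fun h => hia (Fin.succ_injective n h).symm⟩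
    have h3 : ({0, i.succ, a.succ} : Finset (Fin (n + 1))).card = 3 := by
      have n1 : (0 : Fin (n + 1)) ∉ ({i.succ, a.succ} : Finset (Fin (n + 1))) := by
        simp only [Finset.mem_insert, Finset.mem_singleton]
        push_neg
        exact ⟨Ne.symm (Fin.succ_ne_zero i), Ne.symm (Fin.succ_ne_zero a)⟩
      have n2 : i.succ ∉ ({a.succ} : Finset (Fin (n + 1))) := by
        simp only [Finset.mem_singleton, Fin.succ_inj]
        exact hia
      rw [Finset.card_insert_of_notMem n1, Finset.card_insert_of_notMem n2,
        Finset.card_singleton]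
    have hle := Finset.card_le_card hsub
    rw [h3] at hle
    omega
  · intro hi
    simp only [Finset.mem_insert, Finset.mem_singleton] at hi
    rcases hi with rfl | rfl
    · rw [heq i b hab]
      exact ⟨by simp, Finset.card_pair (Ne.symm (Fin.succ_ne_zero b))⟩
    · rw [Finset.pair_comm a i, heq i a (Ne.symm hab)]
      exact ⟨by simp, Finset.card_pair (Ne.symm (Fin.succ_ne_zero a))⟩

lemma key_adj (n : ℕ) (i : Fin n) (A : {A : Finset (Fin n) // A.card = 2})
    (hB : ({0, i.succ} : Finset (Fin (n + 1))).card = 2)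
    (hC : (A.val.image Fin.succ).card = 2) :
    (tokenGraph (_root_.starGraph n) 2).Adj ⟨{0, i.succ}, hB⟩ ⟨A.val.image Fin.succ, hC⟩ ↔
      i ∈ A.val := by
  rw [tokenStar_adj_iff]
  exact key_adj' n i A.val A.2

/-- The `2`-token graph of the star `K_{1,n}` is isomorphic to the barycentric
subdivision of `K_n`, via `i ↦ {0, i}` on original vertices (here the vertex `i` of
`K_n` corresponds to the leaf `i.succ` of the star) and `{i, j} ↦ {i, j}` on
subdivision vertices. -/
theorem tokenGraph_star_two_iso_subdivision (n : ℕ) (hn : 2 ≤ n) :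
    ∃ φ : subdivisionComplete n ≃g tokenGraph (_root_.starGraph n) 2,
      (∀ i : Fin n, ((φ (Sum.inl i) : Finset (Fin (n + 1)))) = {0, i.succ}) ∧
      (∀ A : {A : Finset (Fin n) // A.card = 2},
        ((φ (Sum.inr A) : Finset (Fin (n + 1)))) = A.val.image Fin.succ) := by
  classical
  have hBcard : ∀ i : Fin n, ({0, i.succ} : Finset (Fin (n + 1))).card = 2 := by
    intro i
    exact Finset.card_pair (Fin.succ_ne_zero i).symm
  have hCcard : ∀ A : {A : Finset (Fin n) // A.card = 2},
      (A.val.image Fin.succ).card = 2 := by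
    intro A
    rw [Finset.card_image_of_injective _ (Fin.succ_injective n), A.2]
  set f : (Fin n ⊕ {A : Finset (Fin n) // A.card = 2}) →
      {A : Finset (Fin (n + 1)) // A.card = 2} :=
    fun v => Sum.elim (fun i => ⟨{0, i.succ}, hBcard i⟩)
      (fun A => ⟨A.val.image Fin.succ, hCcard A⟩) v with hf
  have hinj : Function.Injective f := by
    rintro (i | A) (j | B) h
    · simp only [hf, Sum.elim_inl, Subtype.mk.injEq] at h
      have : i.succ ∈ ({0, j.succ} : Finset (Fin (n + 1))) := by
        rw [← h]; simp
      simp only [Finset.mem_insert, Finset.mem_singleton] at this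
      rcases this with h' | h'
      · exact absurd h' (Fin.succ_ne_zero i)
      · rw [Fin.succ_injective n h']
    · exfalso
      simp only [hf, Sum.elim_inl, Sum.elim_inr, Subtype.mk.injEq] at h
      have : (0 : Fin (n + 1)) ∈ B.val.image Fin.succ := by rw [← h]; simp
      simp only [Finset.mem_image] at this
      obtain ⟨y, -, hy⟩ := this
      exact Fin.succ_ne_zero y hy
    · exfalso
      simp only [hf, Sum.elim_inl, Sum.elim_inr, Subtype.mk.injEq] at h
      have : (0 : Fin (n + 1)) ∈ A.val.image Fin.succ := by rw [h]; simp
      simp only [Finset.mem_image] at this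
      obtain ⟨y, -, hy⟩ := this
      exact Fin.succ_ne_zero y hy
    · simp only [hf, Sum.elim_inr, Subtype.mk.injEq] at h
      exact congrArg Sum.inr (Subtype.ext
        (Finset.image_injective (Fin.succ_injective n) h))
  have hsurj : Function.Surjective f := by
    rintro ⟨B, hB⟩
    obtain ⟨a, b, hab, rfl⟩ := Finset.card_eq_two.mp hB
    rcases Fin.eq_zero_or_eq_succ a with rfl | ⟨i, rfl⟩
    · rcases Fin.eq_zero_or_eq_succ b with rfl | ⟨j, rfl⟩
      · exact absurd rfl hab
      · exact ⟨Sum.inl j, rfl⟩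
    · rcases Fin.eq_zero_or_eq_succ b with rfl | ⟨j, rfl⟩
      · exact ⟨Sum.inl i, Subtype.ext (Finset.pair_comm 0 i.succ)⟩
      · have hij : i ≠ j := fun h => hab (by rw [h])
        refine ⟨Sum.inr ⟨{i, j}, Finset.card_pair hij⟩, Subtype.ext ?_⟩
        simp [hf]
  let e : (Fin n ⊕ {A : Finset (Fin n) // A.card = 2}) ≃
      {A : Finset (Fin (n + 1)) // A.card = 2} := Equiv.ofBijective f ⟨hinj, hsurj⟩
  have he : ∀ v, e v = f v := fun v => rfl
  have hrel : ∀ v w, (tokenGraph (_root_.starGraph n) 2).Adj (e v) (e w) ↔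
      (subdivisionComplete n).Adj v w := by
    rintro (i | A) (j | B)
    · rw [he, he]
      constructor
      · intro h
        exfalso
        rw [tokenStar_adj_iff] at h
        obtain ⟨h0, -⟩ := h
        simp only [hf, Sum.elim_inl, Finset.mem_symmDiff, Finset.mem_insert,
          Finset.mem_singleton] at h0
        tauto
      · rintro (⟨_, _, _, h, _⟩ | ⟨_, _, h, _, _⟩) <;> simp at h
    · rw [he, he]
      simp only [hf, Sum.elim_inl, Sum.elim_inr]
      rw [key_adj]
      constructor
      · intro h
        exact Or.inl ⟨i, B, rfl, rfl, h⟩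
      · rintro (⟨i', B', h1, h2, h3⟩ | ⟨i', B', h1, h2, h3⟩)
        · rw [Sum.inl.injEq] at h1
          rw [Sum.inr.injEq] at h2
          rw [h1, h2]; exact h3
        · simp at h1
    · rw [he, he]
      simp only [hf, Sum.elim_inl, Sum.elim_inr]
      rw [(tokenGraph (_root_.starGraph n) 2).adj_comm, key_adj]
      constructor
      · intro h
        exact Or.inr ⟨j, A, rfl, rfl, h⟩
      · rintro (⟨i', B', h1, h2, h3⟩ | ⟨i', B', h1, h2, h3⟩)
        · simp at h1
        · rw [Sum.inr.injEq] at h1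
          rw [Sum.inl.injEq] at h2
          rw [h2, h1]; exact h3
    · rw [he, he]
      constructor
      · intro h
        exfalso
        rw [tokenStar_adj_iff] at h
        obtain ⟨h0, -⟩ := h
        simp only [hf, Sum.elim_inr, Finset.mem_symmDiff, Finset.mem_image] at h0
        rcases h0 with ⟨⟨y, -, hy⟩, -⟩ | ⟨⟨y, -, hy⟩, -⟩ <;> exact Fin.succ_ne_zero y hy
      · rintro (⟨_, _, h, _, _⟩ | ⟨_, _, _, h, _⟩) <;> simp at h
  refine ⟨⟨e, fun {v w} => hrel v w⟩, fun i => rfl, fun A => rfl⟩
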